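/- Let α > 0 and define f_α : ℕ → ℝ/ℤ by f_α(n) = αn mod 1. If p is an idempotent ultrafilter on ℕ (i.e. p + p = p), then the limit of f_α along p equals 0 in ℝ/ℤ. -/

import Mathlib

/-- `f_α : ℕ → ℝ/ℤ`, `f_α(n) = α n mod 1`. -/
noncomputable def circMap (α : ℝ) (n : ℕ) : UnitAddCircle := ((α * n : ℝ) : UnitAddCircle)

/-- The ultrafilter sum: `A ∈ usum p q ↔ {x : {y : x + y ∈ A} ∈ q} ∈ p`. -/
def usum (p q : Ultrafilter ℕ) : Ultrafilter ℕ :=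
  p.bind fun x => q.map fun y => x + y

theorem circMap_idempotent_limit_zero (α : ℝ) (hα : 0 < α)
    (p : Ultrafilter ℕ) (hp : usum p p = p) :
    Filter.Tendsto (circMap α) (p : Filter ℕ) (nhds 0) := by
  obtain ⟨z, -, hz⟩ := isCompact_univ.ultrafilter_le_nhds' (p.map (circMap α)) Filter.univ_mem
  have hz' : Filter.Tendsto (circMap α) (p : Filter ℕ) (nhds z) := hz
  have hadd : ∀ x y : ℕ, circMap α (x + y) = circMap α x + circMap α y := by
    intro x y
    unfold circMap
    push_cast
    rw [mul_add]
    rfl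
  have key : Filter.Tendsto (circMap α) (p : Filter ℕ) (nhds (z + z)) := by
    intro U hU
    -- find V ∈ nhds z with V + V ⊆ U
    have hc : Filter.Tendsto (fun q : UnitAddCircle × UnitAddCircle => q.1 + q.2)
        (nhds (z, z)) (nhds (z + z)) := (continuous_add.tendsto _)
    have := hc hU
    rw [nhds_prod_eq, Filter.mem_map, Filter.mem_prod_iff] at this
    obtain ⟨s, hs, t, ht, hst⟩ := this
    set V := s ∩ t with hV
    have hVn : V ∈ nhds z := Filter.inter_mem hs ht
    have hVU : ∀ a b : UnitAddCircle, a ∈ V → b ∈ V → a + b ∈ U := by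
      intro a b ha hb
      exact hst (Set.mk_mem_prod ha.1 hb.2)
    have hA : {x | circMap α x ∈ V} ∈ p := hz' hVn
    have : circMap α ⁻¹' U ∈ (usum p p : Filter ℕ) := by
      have : {x : ℕ | {y : ℕ | circMap α (x + y) ∈ U} ∈ p} ∈ p := by
        refine Filter.mem_of_superset hA ?_
        intro x hx
        refine Filter.mem_of_superset hA ?_
        intro y hy
        simp only [Set.mem_setOf_eq] at *
        rw [hadd]
        exact hVU _ _ hx hy
      exact this
    rwa [hp] at this
  have : z + z = z := tendsto_nhds_unique key hz'
  have hz0 : z = 0 := by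
    have := add_right_cancel (a := z) (b := z) (c := 0) (by simpa using this)
    exact this
  rwa [hz0] at hz'
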